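/- Suppose the discrete mechanism p is ε-differentially private and the dataset metric space has the path property: for all x, y ∈ D and every k ∈ ℕ with k < d̄(x,y) ≤ k+1, there exists x' ∈ D with 0 < d̄(x,x') ≤ 1 and d̄(x',y) ≤ k. Then for every x ∈ D and every i ∈ ℕ, Aᵢˣ ⊇ ∪_{y∈D : d̄(x,y) ≤ i} R₀ʸ, where Aⱼˣ := ∪_{k≤j} Rₖˣ. -/

import Mathlib

/-- The `i`-th layer of the probability distribution `p x`:
`R_i^x = {r | M exp(-(i+1)ε) < p x r ≤ M exp(-i ε)}`. -/
def layerSet {D R : Type*} (p : D → R → ℝ) (ε M : ℝ) (x : D) (i : ℕ) : Set R :=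
  {r | M * Real.exp (-((i : ℝ) + 1) * ε) < p x r ∧ p x r ≤ M * Real.exp (-(i : ℝ) * ε)}

/-- `A_j^x`, the union of the layers of index `≤ j`. -/
def cumSet {D R : Type*} (p : D → R → ℝ) (ε M : ℝ) (x : D) (j : ℕ) : Set R :=
  ⋃ k ≤ j, layerSet p ε M x k

/-- `ε`-differential privacy of a discrete mechanism: for all neighbors `x, x'`
(i.e. `0 < d̄(x,x') ≤ 1`) and all `r`, `p x r ≤ exp ε * p x' r`. -/
def IsDP {D R : Type*} [PseudoMetricSpace D] (p : D → R → ℝ) (ε : ℝ) : Prop :=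
  ∀ x x' : D, 0 < dist x x' → dist x x' ≤ 1 → ∀ r : R, p x r ≤ Real.exp ε * p x' r

/-- If the discrete mechanism `p` is `ε`-differentially private and the dataset
metric space has the path property, then for every `x` and `i`,
`A_i^x ⊇ ∪_{y : d̄(x,y) ≤ i} R_0^y`. -/
theorem stmt_7 {D R : Type*} [MetricSpace D] [MetricSpace R] [Countable R]
    (p : D → R → ℝ) (ε : ℝ) (hε : 0 < ε)
    (hpos : ∀ (x : D) (r : R), 0 < p x r) (hsum1 : ∀ x : D, HasSum (p x) 1)
    (M : ℝ) (hMpos : 0 < M)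
    (hM : IsLUB {v : ℝ | ∃ (x : D) (r : R), v = p x r} M)
    (hdp : IsDP p ε)
    (hpath : ∀ x y : D, ∀ k : ℕ, (k : ℝ) < dist x y → dist x y ≤ (k : ℝ) + 1 →
      ∃ x' : D, 0 < dist x x' ∧ dist x x' ≤ 1 ∧ dist x' y ≤ (k : ℝ)) :
    ∀ x : D, ∀ i : ℕ,
      (⋃ y ∈ {y : D | dist x y ≤ (i : ℝ)}, layerSet p ε M y 0) ⊆ cumSet p ε M x i := by
  intro x i r hr
  simp only [Set.mem_iUnion, Set.mem_setOf_eq] at hr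
  obtain ⟨y, hxy, hlow, _⟩ := hr
  have key : ∀ k : ℕ, ∀ x y : D, dist x y ≤ (k : ℝ) →
      p y r ≤ Real.exp ((k : ℝ) * ε) * p x r := by
    intro k
    induction k with
    | zero =>
      intro x y h
      have hxy0 : x = y := dist_eq_zero.mp (le_antisymm (by simpa using h) dist_nonneg)
      subst hxy0; simp
    | succ k ih =>
      intro x y h
      by_cases hk : dist x y ≤ (k : ℝ)
      · calc p y r ≤ Real.exp ((k : ℝ) * ε) * p x r := ih x y hk
          _ ≤ Real.exp ((↑(k+1) : ℝ) * ε) * p x r := by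
              apply mul_le_mul_of_nonneg_right _ (hpos x r).le
              apply Real.exp_le_exp.mpr
              push_cast; nlinarith
      · push_neg at hk
        obtain ⟨x', h1, h2, h3⟩ := hpath x y k hk (by push_cast at h ⊢; linarith)
        have hdp' := hdp x' x (by rwa [dist_comm]) (by rwa [dist_comm]) r
        calc p y r ≤ Real.exp ((k : ℝ) * ε) * p x' r := ih x' y h3
          _ ≤ Real.exp ((k : ℝ) * ε) * (Real.exp ε * p x r) := by
              exact mul_le_mul_of_nonneg_left hdp' (Real.exp_pos _).le
          _ = Real.exp ((↑(k+1) : ℝ) * ε) * p x r := by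
              rw [← mul_assoc, ← Real.exp_add]; push_cast; ring_nf
  have hchain := key i x y hxy
  have hlb : M * Real.exp (-((i : ℝ) + 1) * ε) < p x r := by
    have h1 : Real.exp (-(i : ℝ) * ε) * p y r ≤ p x r := by
      have := mul_le_mul_of_nonneg_left hchain (Real.exp_pos (-(i : ℝ) * ε)).le
      rw [← mul_assoc, ← Real.exp_add] at this
      simpa using this
    have h2 : M * Real.exp (-((0:ℕ) + 1 : ℝ) * ε) * Real.exp (-(i : ℝ) * ε)
        < p y r * Real.exp (-(i : ℝ) * ε) :=
      mul_lt_mul_of_pos_right hlow (Real.exp_pos _)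
    calc M * Real.exp (-((i : ℝ) + 1) * ε)
        = M * Real.exp (-((0:ℕ) + 1 : ℝ) * ε) * Real.exp (-(i : ℝ) * ε) := by
          rw [mul_assoc, ← Real.exp_add]; push_cast; ring_nf
      _ < p y r * Real.exp (-(i : ℝ) * ε) := h2
      _ ≤ p x r := by rw [mul_comm]; exact h1
  have hub : p x r ≤ M := hM.1 ⟨x, r, rfl⟩
  have hP : ∃ k : ℕ, M * Real.exp (-((k : ℝ) + 1) * ε) < p x r := ⟨i, hlb⟩
  classical
  set k0 := Nat.find hP with hk0
  have hk0le : k0 ≤ i := Nat.find_le hlb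
  have hk0spec : M * Real.exp (-((k0 : ℝ) + 1) * ε) < p x r := Nat.find_spec hP
  have hupper : p x r ≤ M * Real.exp (-(k0 : ℝ) * ε) := by
    match hm : k0 with
    | 0 => simpa using hub
    | m + 1 =>
      have := Nat.find_min hP (by omega : m < k0)
      push_neg at this
      convert this using 3
      · rfl
      · push_cast; ring
  refine Set.mem_iUnion.mpr ⟨k0, Set.mem_iUnion.mpr ⟨hk0le, hk0spec, hupper⟩⟩
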